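/- If k > n is not an integral multiple of n, writing k = pn + q with p ≥ 1 and 1 ≤ q ≤ n−1, then R*(k) ≤ R*(n + ⌈q/p⌉). -/
import Mathlib


/-- A closed walk with `k` visits on `n` targets, modeled as a `k`-periodic
sequence of targets in which consecutive visits are distinct and every
target is visited at least once in each period. -/
structure CWalk (n k : ℕ) where
  seq : ℕ → Fin n
  periodic : ∀ i, seq (i + k) = seq i
  step : ∀ i, seq i ≠ seq (i + 1)
  covers : ∀ d : Fin n, ∃ i < k, seq i = d

namespace CWalk

/-- Travel time from the `i`-th to the `j`-th visit. -/
noncomputable def tt {n k : ℕ} (c : Fin n → Fin n → ℝ) (W : CWalk n k) (i j : ℕ) : ℝ :=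
  ∑ t ∈ Finset.Ico i j, c (W.seq t) (W.seq (t + 1))

/-- Duration of one period of the walk. -/
noncomputable def duration {n k : ℕ} (c : Fin n → Fin n → ℝ) (W : CWalk n k) : ℝ :=
  W.tt c 0 k

/-- Revisit time of target `d`: the maximum time between consecutive visits to `d`. -/
noncomputable def RT {n k : ℕ} (c : Fin n → Fin n → ℝ) (W : CWalk n k) (d : Fin n) : ℝ :=
  sSup {T : ℝ | ∃ i j : ℕ, i < j ∧ W.seq i = d ∧ W.seq j = d ∧
    (∀ t, i < t → t < j → W.seq t ≠ d) ∧ T = W.tt c i j}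

/-- Revisit time of the walk: maximum revisit time over all targets. -/
noncomputable def R {n k : ℕ} (c : Fin n → Fin n → ℝ) (W : CWalk n k) : ℝ :=
  sSup {T : ℝ | ∃ d : Fin n, T = W.RT c d}

end CWalk

/-- Optimal revisit time over all closed walks with `k` visits. -/
noncomputable def Rstar (n : ℕ) (c : Fin n → Fin n → ℝ) (k : ℕ) : ℝ :=
  sInf {T : ℝ | ∃ W : CWalk n k, T = W.R c}

/-- Optimal TSP tour length: minimal duration of a closed walk with `n` visits
(each target is then visited exactly once). -/
noncomputable def TSPstar (n : ℕ) (c : Fin n → Fin n → ℝ) : ℝ :=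
  sInf {T : ℝ | ∃ W : CWalk n n, T = W.duration c}

namespace CWalk

variable {n k : ℕ}

lemma seq_add_mul (W : CWalk n k) (i L : ℕ) : W.seq (i + L * k) = W.seq i := by
  induction L with
  | zero => simp
  | succ L ih =>
    have h : i + (L + 1) * k = (i + L * k) + k := by ring
    rw [h, W.periodic, ih]

lemma seq_mod (W : CWalk n k) (i : ℕ) : W.seq (i % k) = W.seq i := by
  conv_rhs => rw [← Nat.mod_add_div' i k]
  rw [seq_add_mul]

lemma seq_congr (W : CWalk n k) {a b : ℕ} (h : a % k = b % k) : W.seq a = W.seq b := by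
  rw [← W.seq_mod a, ← W.seq_mod b, h]

lemma tt_nonneg {c : Fin n → Fin n → ℝ} (hc : ∀ u v : Fin n, u ≠ v → 0 < c u v)
    (W : CWalk n k) (i j : ℕ) : 0 ≤ W.tt c i j :=
  Finset.sum_nonneg fun t _ => (hc _ _ (W.step t)).le

lemma tt_add (c : Fin n → Fin n → ℝ) (W : CWalk n k) {i j l : ℕ} (h1 : i ≤ j) (h2 : j ≤ l) :
    W.tt c i l = W.tt c i j + W.tt c j l :=
  (Finset.sum_Ico_consecutive _ h1 h2).symm

lemma tt_mono {c : Fin n → Fin n → ℝ} (hc : ∀ u v : Fin n, u ≠ v → 0 < c u v)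
    (W : CWalk n k) {i j l : ℕ} (h1 : i ≤ j) (h2 : j ≤ l) :
    W.tt c i j ≤ W.tt c i l := by
  rw [tt_add c W h1 h2]
  have := tt_nonneg hc W j l
  linarith

lemma tt_range (c : Fin n → Fin n → ℝ) (W : CWalk n k) (a : ℕ) :
    W.tt c a (a + k) = ∑ t ∈ Finset.range k, c (W.seq (a + t)) (W.seq (a + t + 1)) := by
  rw [tt, Finset.sum_Ico_eq_sum_range]
  simp

lemma tt_window (c : Fin n → Fin n → ℝ) (W : CWalk n k) (a : ℕ) :
    W.tt c a (a + k) = W.duration c := by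
  have key : ∀ a, (∑ t ∈ Finset.range k, c (W.seq (a + t)) (W.seq (a + t + 1)))
      = ∑ t ∈ Finset.range k, c (W.seq t) (W.seq (t + 1)) := by
    intro a
    induction a with
    | zero => simp
    | succ a ih =>
      have e1 : (∑ t ∈ Finset.range (k + 1), c (W.seq (a + t)) (W.seq (a + t + 1)))
          = (∑ t ∈ Finset.range k, c (W.seq (a + 1 + t)) (W.seq (a + 1 + t + 1)))
            + c (W.seq a) (W.seq (a + 1)) := by
        rw [Finset.sum_range_succ']
        simp only [Nat.add_zero]
        congr 1
        apply Finset.sum_congr rfl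
        intro t _
        have h1 : a + (t + 1) = a + 1 + t := by ring
        have h2 : a + (t + 1) + 1 = a + 1 + t + 1 := by ring
        rw [h1]
      have e2 : (∑ t ∈ Finset.range (k + 1), c (W.seq (a + t)) (W.seq (a + t + 1)))
          = (∑ t ∈ Finset.range k, c (W.seq (a + t)) (W.seq (a + t + 1)))
            + c (W.seq (a + k)) (W.seq (a + k + 1)) := Finset.sum_range_succ _ _
      have e3 : c (W.seq (a + k)) (W.seq (a + k + 1)) = c (W.seq a) (W.seq (a + 1)) := by
        have h1 : W.seq (a + k) = W.seq a := W.periodic a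
        have h2 : W.seq (a + k + 1) = W.seq (a + 1) := by
          have : a + k + 1 = (a + 1) + k := by ring
          rw [this, W.periodic]
        rw [h1, h2]
      rw [e3] at e2
      linarith [ih, e1.symm.trans e2]
  rw [tt_range, key, duration]
  rw [show W.tt c 0 k = W.tt c 0 (0 + k) from by rw [Nat.zero_add], tt_range]
  simp

lemma RT_nonneg {c : Fin n → Fin n → ℝ} (hc : ∀ u v : Fin n, u ≠ v → 0 < c u v)
    (W : CWalk n k) (d : Fin n) : 0 ≤ W.RT c d := by
  apply Real.sSup_nonneg
  rintro T ⟨i, j, _, _, _, _, rfl⟩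
  exact tt_nonneg hc W i j

lemma R_nonneg {c : Fin n → Fin n → ℝ} (hc : ∀ u v : Fin n, u ≠ v → 0 < c u v)
    (W : CWalk n k) : 0 ≤ W.R c := by
  apply Real.sSup_nonneg
  rintro T ⟨d, rfl⟩
  exact RT_nonneg hc W d

lemma R_le {c : Fin n → Fin n → ℝ} (hc : ∀ u v : Fin n, u ≠ v → 0 < c u v)
    (W : CWalk n k) {D : ℝ} (hD : 0 ≤ D)
    (h : ∀ i : ℕ, ∃ j, i < j ∧ W.seq j = W.seq i ∧ W.tt c i j ≤ D) : W.R c ≤ D := by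
  apply Real.sSup_le _ hD
  rintro T ⟨d, rfl⟩
  apply Real.sSup_le _ hD
  rintro T ⟨i, j, hij, hi, hj, hbtw, rfl⟩
  obtain ⟨j', hij', hseq', hle'⟩ := h i
  have hjj' : j ≤ j' := by
    by_contra hcon
    push_neg at hcon
    exact hbtw j' hij' hcon (by rw [hseq', hi])
  exact le_trans (tt_mono hc W hij.le hjj') hle'

lemma duration_le_R {c : Fin n → Fin n → ℝ} (hc : ∀ u v : Fin n, u ≠ v → 0 < c u v)
    (W : CWalk n k)
    (huniq : ∃ i < k, ∀ j < k, W.seq j = W.seq i → j = i) :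
    W.duration c ≤ W.R c := by
  obtain ⟨i₀, hi₀, huni⟩ := huniq
  have hk0 : 0 < k := lt_of_le_of_lt (Nat.zero_le _) hi₀
  set d := W.seq i₀ with hd
  have hbtw : ∀ t, i₀ < t → t < i₀ + k → W.seq t ≠ d := by
    intro t h1 h2 hseq
    have hmod : W.seq (t % k) = d := by rw [W.seq_mod]; exact hseq
    have htk : t % k < k := Nat.mod_lt _ hk0
    have := huni (t % k) htk hmod
    rcases Nat.lt_or_ge t k with h | h
    · rw [Nat.mod_eq_of_lt h] at this; omega
    · have ht2 : t - k < k := by omega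
      rw [Nat.mod_eq_sub_mod h, Nat.mod_eq_of_lt ht2] at this
      omega
  have hmemgap : W.duration c ∈ {T : ℝ | ∃ i j : ℕ, i < j ∧ W.seq i = d ∧ W.seq j = d ∧
      (∀ t, i < t → t < j → W.seq t ≠ d) ∧ T = W.tt c i j} := by
    refine ⟨i₀, i₀ + k, by omega, rfl, ?_, hbtw, (tt_window c W i₀).symm⟩
    rw [W.periodic]
  have hbdd : BddAbove {T : ℝ | ∃ i j : ℕ, i < j ∧ W.seq i = d ∧ W.seq j = d ∧
      (∀ t, i < t → t < j → W.seq t ≠ d) ∧ T = W.tt c i j} := by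
    refine ⟨W.duration c, ?_⟩
    rintro T ⟨i, j, hij, hi, hj, hb, rfl⟩
    have hjk : j ≤ i + k := by
      by_contra hcon
      push_neg at hcon
      exact hb (i + k) (by omega) hcon (by rw [W.periodic]; exact hi)
    calc W.tt c i j ≤ W.tt c i (i + k) := tt_mono hc W hij.le hjk
    _ = W.duration c := tt_window c W i
  have h1 : W.duration c ≤ W.RT c d := le_csSup hbdd hmemgap
  have h2 : W.RT c d ≤ W.R c := by
    refine le_csSup ?_ ⟨d, rfl⟩
    have heq : {T : ℝ | ∃ e : Fin n, T = W.RT c e} = Set.range (W.RT c) := by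
      ext T; constructor
      · rintro ⟨e, rfl⟩; exact ⟨e, rfl⟩
      · rintro ⟨e, rfl⟩; exact ⟨e, rfl⟩
    rw [heq]
    exact (Set.finite_range _).bddAbove
  linarith

end CWalk

/-- Skip predicate: position `u` (in the long walk) is skipped. -/
def RSkip (k' p r u : ℕ) : Prop := u % k' = 1 ∧ r ≤ u / k' % p

instance RSkip.dec (k' p r u : ℕ) : Decidable (RSkip k' p r u) :=
  inferInstanceAs (Decidable (_ ∧ _))

def phi (k' p r : ℕ) : ℕ → ℕ
  | 0 => 0
  | i + 1 => phi k' p r i + (if RSkip k' p r (phi k' p r i + 1) then 2 else 1)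

namespace RSkipPhi

variable {k' p r : ℕ}

lemma phi_lt_succ (i : ℕ) : phi k' p r i < phi k' p r (i + 1) := by
  simp only [phi]; split <;> omega

lemma phi_mono : StrictMono (phi k' p r) :=
  strictMono_nat_of_lt_succ phi_lt_succ

lemma phi_not_skip (hk' : 3 ≤ k') : ∀ i, ¬ RSkip k' p r (phi k' p r i) := by
  intro i
  induction i with
  | zero =>
    simp only [phi, RSkip, Nat.zero_mod]
    rintro ⟨h, -⟩
    omega
  | succ i ih =>
    simp only [phi]
    split
    next h =>
      rintro ⟨h1, -⟩
      have h2 : phi k' p r i + 1 ≡ phi k' p r i + 2 [MOD k'] := h.1.trans h1.symm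
      have h3 : k' ∣ 1 := by
        have := (Nat.modEq_iff_dvd' (by omega)).mp h2
        simpa using this
      have := Nat.le_of_dvd (by omega) h3
      omega
    next h => exact h

lemma phi_surj (hk' : 3 ≤ k') : ∀ u, ¬ RSkip k' p r u → ∃ i, phi k' p r i = u := by
  intro u
  induction u using Nat.strong_induction_on with
  | _ u IH =>
    match u with
    | 0 => exact fun _ => ⟨0, rfl⟩
    | u + 1 =>
      intro hns
      by_cases hs : RSkip k' p r u
      · have hu1 : u % k' = 1 := hs.1
        have hu : 1 ≤ u := by
          rcases Nat.eq_zero_or_pos u with h | h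
          · subst h; simp at hu1
          · exact h
        have h2 : ¬ RSkip k' p r (u - 1) := by
          rintro ⟨h3, -⟩
          have hdm := Nat.div_add_mod u k'
          have : u - 1 = k' * (u / k') := by omega
          rw [this, Nat.mul_mod_right] at h3
          omega
        obtain ⟨i, hi⟩ := IH (u - 1) (by omega) h2
        refine ⟨i + 1, ?_⟩
        simp only [phi, hi]
        rw [show u - 1 + 1 = u from by omega, if_pos hs]
        omega
      · obtain ⟨i, hi⟩ := IH u (by omega) hs
        refine ⟨i + 1, ?_⟩
        simp only [phi, hi]
        rw [if_neg hns]

noncomputable def cntSkip (k' p r x : ℕ) : ℕ :=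
  ((Finset.range x).filter (RSkip k' p r)).card

lemma cnt_succ (x : ℕ) :
    cntSkip k' p r (x + 1) = cntSkip k' p r x + if RSkip k' p r x then 1 else 0 := by
  unfold cntSkip
  rw [Finset.range_add_one, Finset.filter_insert]
  split
  · rw [Finset.card_insert_of_notMem (by simp)]
  · omega

lemma phi_cnt (hk' : 3 ≤ k') : ∀ i, phi k' p r i = i + cntSkip k' p r (phi k' p r i) := by
  intro i
  induction i with
  | zero => simp [phi, cntSkip]
  | succ i ih =>
    have hns := phi_not_skip (p := p) (r := r) hk' i
    simp only [phi]
    by_cases hs : RSkip k' p r (phi k' p r i + 1)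
    · rw [if_pos hs]
      have e1 : phi k' p r i + 2 = (phi k' p r i + 1) + 1 := by omega
      rw [e1, cnt_succ, cnt_succ, if_pos hs, if_neg hns]
      omega
    · rw [if_neg hs]
      rw [cnt_succ, if_neg hns]
      omega

lemma skip_period (hk'0 : 0 < k') (u : ℕ) :
    RSkip k' p r (u + p * k') ↔ RSkip k' p r u := by
  unfold RSkip
  rw [Nat.add_mul_mod_self_right, Nat.add_mul_div_right _ _ hk'0, Nat.add_mod_right]

lemma cnt_pk (hk' : 3 ≤ k') (hrp : r ≤ p) : cntSkip k' p r (p * k') = p - r := by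
  unfold cntSkip
  have himg : (Finset.range (p * k')).filter (RSkip k' p r)
      = (Finset.Ico r p).image (fun b => b * k' + 1) := by
    ext u
    simp only [Finset.mem_filter, Finset.mem_range, Finset.mem_image, Finset.mem_Ico, RSkip]
    constructor
    · rintro ⟨hu, h1, h2⟩
      have hu2 : u < k' * p := by rw [Nat.mul_comm]; exact hu
      have hb : u / k' < p := Nat.div_lt_of_lt_mul hu2
      refine ⟨u / k', ⟨?_, hb⟩, ?_⟩
      · rwa [Nat.mod_eq_of_lt hb] at h2
      · have := Nat.div_add_mod u k'
        have h7 : k' * (u / k') = u / k' * k' := Nat.mul_comm _ _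
        omega
    · rintro ⟨b, ⟨hrb, hbp⟩, rfl⟩
      have h1 : (b * k' + 1) % k' = 1 := by
        rw [Nat.add_comm, Nat.add_mul_mod_self_right, Nat.mod_eq_of_lt (by omega)]
      have h2 : (b * k' + 1) / k' = b := by
        rw [Nat.add_comm, Nat.add_mul_div_right _ _ (by omega : 0 < k'),
          Nat.div_eq_of_lt (by omega)]
        omega
      refine ⟨?_, h1, ?_⟩
      · have h5 : (b + 1) * k' ≤ p * k' := Nat.mul_le_mul_right _ (by omega)
        have h6 : (b + 1) * k' = b * k' + k' := by ring
        omega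
      · rw [h2, Nat.mod_eq_of_lt hbp]
        exact hrb
  rw [himg, Finset.card_image_of_injective _ (fun a b hab => by
    have : a * k' = b * k' := by omega
    exact Nat.eq_of_mul_eq_mul_right (by omega) this), Nat.card_Ico]

lemma phi_K (hk' : 3 ≤ k') (hrp : r ≤ p) :
    phi k' p r (r * k' + (p - r) * (k' - 1)) = p * k' := by
  have hns : ¬ RSkip k' p r (p * k') := by
    rintro ⟨h1, -⟩
    rw [Nat.mul_mod_left] at h1
    omega
  obtain ⟨i, hi⟩ := phi_surj hk' _ hns
  have hcnt := phi_cnt (p := p) (r := r) hk' i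
  rw [hi, cnt_pk hk' hrp] at hcnt
  have hiK : i = r * k' + (p - r) * (k' - 1) := by
    obtain ⟨pr, rfl⟩ : ∃ pr, p = r + pr := ⟨p - r, by omega⟩
    have h1 : pr * k' = pr * (k' - 1) + pr := by
      have h2 : k' - 1 + 1 = k' := by omega
      calc pr * k' = pr * ((k' - 1) + 1) := by rw [h2]
      _ = pr * (k' - 1) + pr := by ring
    have h3 : (r + pr) * k' = r * k' + pr * k' := by ring
    simp only [Nat.add_sub_cancel_left] at hcnt ⊢
    omega
  rw [← hiK, hi]

lemma phi_add_K (hk' : 3 ≤ k') (hrp : r ≤ p) (i : ℕ) :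
    phi k' p r (i + (r * k' + (p - r) * (k' - 1))) = phi k' p r i + p * k' := by
  induction i with
  | zero => rw [Nat.zero_add, phi_K hk' hrp, phi]; omega
  | succ i ih =>
    have e : i + 1 + (r * k' + (p - r) * (k' - 1)) = (i + (r * k' + (p - r) * (k' - 1))) + 1 := by
      omega
    rw [e]
    simp only [phi, ih]
    have e2 : phi k' p r i + p * k' + 1 = (phi k' p r i + 1) + p * k' := by omega
    rw [e2]
    simp only [skip_period (show 0 < k' by omega)]
    split <;> omega

lemma phi_small (hr1 : 1 ≤ r) (hk'0 : 0 < k') : ∀ i, i < k' → phi k' p r i = i := by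
  intro i
  induction i with
  | zero => intro _; rfl
  | succ i ih =>
    intro hik
    have hi := ih (by omega)
    have hns : ¬ RSkip k' p r (i + 1) := by
      rintro ⟨-, h2⟩
      rw [Nat.div_eq_of_lt hik, Nat.zero_mod] at h2
      omega
    simp only [phi, hi, if_neg hns]

end RSkipPhi

namespace CWalk

variable {n k : ℕ}

lemma card_fiber_sum (W : CWalk n k) :
    ∑ d : Fin n, ((Finset.range k).filter (fun i => W.seq i = d)).card = k := by
  rw [← Finset.card_eq_sum_card_fiberwise (fun x _ => Finset.mem_univ (W.seq x))]
  exact Finset.card_range k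

lemma exists_unique_visit (W : CWalk n k) (hk2n : k < 2 * n) :
    ∃ i < k, ∀ j < k, W.seq j = W.seq i → j = i := by
  have hsum := W.card_fiber_sum
  have hex : ∃ d : Fin n, ((Finset.range k).filter (fun i => W.seq i = d)).card < 2 := by
    by_contra hcon
    push_neg at hcon
    have : 2 * n ≤ k := by
      calc 2 * n = ∑ _d : Fin n, 2 := by
            simp [Finset.card_univ, Nat.mul_comm]
      _ ≤ ∑ d : Fin n, ((Finset.range k).filter (fun i => W.seq i = d)).card :=
            Finset.sum_le_sum fun d _ => hcon d
      _ = k := hsum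
    omega
  obtain ⟨d, hd⟩ := hex
  obtain ⟨i, hik, hid⟩ := W.covers d
  have hmem : i ∈ (Finset.range k).filter (fun i => W.seq i = d) := by
    simp [Finset.mem_filter, Finset.mem_range, hik, hid]
  refine ⟨i, hik, fun j hjk hje => ?_⟩
  have hmem' : j ∈ (Finset.range k).filter (fun i => W.seq i = d) := by
    simp only [Finset.mem_filter, Finset.mem_range]
    exact ⟨hjk, by rw [hje, hid]⟩
  by_contra hne
  have h2 : 2 ≤ ((Finset.range k).filter (fun i => W.seq i = d)).card := by
    apply Finset.one_lt_card.mpr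
    exact ⟨j, hmem', i, hmem, hne⟩
  omega

lemma exists_dup (W : CWalk n k) (hkn : n < k) :
    ∃ u v, u < v ∧ v < k ∧ W.seq u = W.seq v := by
  have hsum := W.card_fiber_sum
  have hex : ∃ d : Fin n, 2 ≤ ((Finset.range k).filter (fun i => W.seq i = d)).card := by
    by_contra hcon
    push_neg at hcon
    have : k ≤ n := by
      calc k = ∑ d : Fin n, ((Finset.range k).filter (fun i => W.seq i = d)).card := hsum.symm
      _ ≤ ∑ _d : Fin n, 1 := Finset.sum_le_sum fun d _ => by have := hcon d; omega
      _ = n := by simp [Finset.card_univ]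
    omega
  obtain ⟨d, hd⟩ := hex
  obtain ⟨a, ha, b, hb, hab⟩ := Finset.one_lt_card.mp hd
  simp only [Finset.mem_filter, Finset.mem_range] at ha hb
  rcases Nat.lt_or_ge a b with h | h
  · exact ⟨a, b, h, hb.1, by rw [ha.2, hb.2]⟩
  · have : b < a := by omega
    exact ⟨b, a, this, ha.1, by rw [ha.2, hb.2]⟩

lemma two_even (L : ℕ) (W : CWalk 2 L) : L % 2 = 0 := by
  have fact : ∀ a b c' : Fin 2, a ≠ b → b ≠ c' → c' = a := by decide
  have h3 : ∀ i, W.seq (i + 2) = W.seq i := fun i =>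
    fact _ _ _ (W.step i) (by have := W.step (i + 1); rwa [show i + 1 + 1 = i + 2 from rfl] at this)
  have h4 : ∀ j i, W.seq (i + 2 * j) = W.seq i := by
    intro j
    induction j with
    | zero => simp
    | succ j ih =>
      intro i
      have e : i + 2 * (j + 1) = (i + 2 * j) + 2 := by ring
      rw [e, h3, ih]
  by_contra h
  have hL : L = 1 + 2 * (L / 2) := by omega
  have h5 : W.seq L = W.seq 1 := by
    have h5' : W.seq (1 + 2 * (L / 2)) = W.seq 1 := h4 _ 1
    rwa [← hL] at h5'
  have h6 : W.seq L = W.seq 0 := by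
    have := W.periodic 0
    rwa [Nat.zero_add] at this
  exact W.step 0 (by rw [← h6, h5])

lemma exists_good (W : CWalk n k) (hn : 3 ≤ n) (hk4 : 4 ≤ k) (hkn : n < k) :
    ∃ s, 1 ≤ s ∧ (∃ a b, a < b ∧ b < k ∧ W.seq a = W.seq s ∧ W.seq b = W.seq s) ∧
      W.seq (s - 1) ≠ W.seq (s + 1) := by
  by_contra Hcon
  push_neg at Hcon
  -- Hcon : ∀ s, 1 ≤ s → (DupAt s) → W.seq (s-1) = W.seq (s+1)
  have hmodne : ∀ x : ℕ, (x % k) ≠ ((x + 2) % k) := by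
    intro x h
    have h2 : x ≡ x + 2 [MOD k] := h
    have h3' := (Nat.modEq_iff_dvd' (show x ≤ x + 2 by omega)).mp h2
    rw [show x + 2 - x = 2 from by omega] at h3'
    have h3 : k ∣ 2 := h3'
    have := Nat.le_of_dvd (by omega) h3
    omega
  have hDup : ∀ s : ℕ, 1 ≤ s →
      (∃ a b, a < b ∧ b < k ∧ W.seq a = W.seq s ∧ W.seq b = W.seq s) →
      (W.seq (s + 2) = W.seq s ∧
        (∃ a b, a < b ∧ b < k ∧ W.seq a = W.seq (s + 1) ∧ W.seq b = W.seq (s + 1))) := by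
    intro s hs hd
    have h1 : W.seq (s - 1) = W.seq (s + 1) := Hcon s hs hd
    have hd1 : ∃ a b, a < b ∧ b < k ∧ W.seq a = W.seq (s + 1) ∧ W.seq b = W.seq (s + 1) := by
      set x := (s - 1) % k with hx
      set y := (s + 1) % k with hy
      have hsx : W.seq x = W.seq (s + 1) := by rw [hx, W.seq_mod, h1]
      have hsy : W.seq y = W.seq (s + 1) := by rw [hy, W.seq_mod]
      have hxy : x ≠ y := by
        have := hmodne (s - 1)
        rw [show s - 1 + 2 = s + 1 from by omega] at this
        exact this
      have hxk : x < k := Nat.mod_lt _ (by omega)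
      have hyk : y < k := Nat.mod_lt _ (by omega)
      rcases Nat.lt_or_ge x y with h | h
      · exact ⟨x, y, h, hyk, hsx, hsy⟩
      · exact ⟨y, x, by omega, hxk, hsy, hsx⟩
    have h2 : W.seq (s + 2) = W.seq s := by
      have := Hcon (s + 1) (by omega) hd1
      rw [show s + 1 - 1 = s from by omega, show s + 1 + 1 = s + 2 from rfl] at this
      rw [← this]
    exact ⟨h2, hd1⟩
  obtain ⟨u, v, huv, hvk, hW⟩ := W.exists_dup hkn
  set s₀ := v with hs₀
  have hs₀1 : 1 ≤ s₀ := by omega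
  have hDs₀ : ∃ a b, a < b ∧ b < k ∧ W.seq a = W.seq s₀ ∧ W.seq b = W.seq s₀ :=
    ⟨u, v, huv, hvk, hW, rfl⟩
  have main : ∀ i, ∃ a b, a < b ∧ b < k ∧ W.seq a = W.seq (s₀ + i) ∧ W.seq b = W.seq (s₀ + i) := by
    intro i
    induction i with
    | zero => simpa using hDs₀
    | succ i ih =>
      have := (hDup (s₀ + i) (by omega) ih).2
      rwa [show s₀ + i + 1 = s₀ + (i + 1) from by omega] at this
  have per : ∀ i, W.seq (s₀ + i + 2) = W.seq (s₀ + i) := fun i =>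
    (hDup (s₀ + i) (by omega) (main i)).1
  have two : ∀ i, W.seq (s₀ + i) = if i % 2 = 0 then W.seq s₀ else W.seq (s₀ + 1) := by
    intro i
    induction i using Nat.strong_induction_on with
    | _ i IH =>
      match i with
      | 0 => simp
      | 1 => simp
      | (j + 2) =>
        have h1 : W.seq (s₀ + (j + 2)) = W.seq (s₀ + j) := by
          have := per j
          rwa [show s₀ + j + 2 = s₀ + (j + 2) from by omega] at this
        rw [h1, IH j (by omega)]
        congr 1
        simp only [eq_iff_iff]
        omega
  have cover2 : ∀ d : Fin n, d = W.seq s₀ ∨ d = W.seq (s₀ + 1) := by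
    intro d
    obtain ⟨x, hx, hxd⟩ := W.covers d
    have h1 : W.seq (x + s₀ * k) = d := by rw [W.seq_add_mul, hxd]
    have h2 : x + s₀ * k = s₀ + (x + s₀ * k - s₀) := by
      have : s₀ ≤ s₀ * k := Nat.le_mul_of_pos_right _ (by omega)
      omega
    rw [h2, two] at h1
    split at h1
    · left; exact h1.symm
    · right; exact h1.symm
  have huniv : (Finset.univ : Finset (Fin n)) ⊆ {W.seq s₀, W.seq (s₀ + 1)} := by
    intro d _
    rcases cover2 d with h | h <;> simp [h]
  have hcard := Finset.card_le_card huniv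
  have h2 : ({W.seq s₀, W.seq (s₀ + 1)} : Finset (Fin n)).card ≤ 2 := by
    apply le_trans (Finset.card_insert_le _ _)
    simp
  rw [Finset.card_univ, Fintype.card_fin] at hcard
  omega

end CWalk

lemma exists_cwalk (n k' : ℕ) (hn : 3 ≤ n) (hnk : n < k') : Nonempty (CWalk n k') := by
  have hk0 : 0 < k' := by omega
  set f : ℕ → Fin n := fun i =>
    if h : i % k' < n then ⟨i % k', h⟩ else ⟨1 + (i % k' - n) % 2, by omega⟩ with hf
  have hper : ∀ i, f (i + k') = f i := by
    intro i
    simp only [hf, Nat.add_mod_right]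
  have hval : ∀ i, (f i).val = if i % k' < n then i % k' else 1 + (i % k' - n) % 2 := by
    intro i
    simp only [hf]
    split <;> rfl
  refine ⟨⟨f, hper, ?_, ?_⟩⟩
  · -- step
    intro i
    set j := i % k' with hj
    have hjk : j < k' := Nat.mod_lt _ hk0
    have hsucc : (i + 1) % k' = (j + 1) % k' := by
      rw [Nat.add_mod, ← hj, Nat.mod_eq_of_lt (show 1 < k' by omega)]
    intro heq
    have hv := congrArg Fin.val heq
    rw [hval, hval, ← hj, hsucc] at hv
    rcases Nat.lt_or_ge (j + 1) k' with h2 | h2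
    · rw [Nat.mod_eq_of_lt h2] at hv
      rcases Nat.lt_or_ge (j + 1) n with h3 | h3
      · rw [if_pos (by omega), if_pos h3] at hv; omega
      · rcases Nat.lt_or_ge j n with h4 | h4
        · rw [if_pos h4, if_neg (by omega)] at hv; omega
        · rw [if_neg (by omega), if_neg (by omega)] at hv; omega
    · have hj2 : j + 1 = k' := by omega
      rw [hj2, Nat.mod_self] at hv
      rw [if_pos (show 0 < n by omega)] at hv
      split at hv <;> omega
  · -- covers
    intro d
    refine ⟨d.val, by omega, ?_⟩
    have hd : d.val % k' = d.val := Nat.mod_eq_of_lt (by omega)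
    apply Fin.ext
    rw [hval, hd, if_pos d.isLt]


/-- if `k = p n + q` with `p ≥ 1` and `1 ≤ q ≤ n - 1`, then
`R*(k) ≤ R*(n + ⌈q/p⌉)`, where `⌈q/p⌉ = (q + p - 1) / p` in natural division. -/
theorem Rstar_upper_bound
    (n p q k : ℕ) (hn : 2 ≤ n) (hp : 1 ≤ p) (hq1 : 1 ≤ q) (hq2 : q ≤ n - 1)
    (hk : k = p * n + q)
    (c : Fin n → Fin n → ℝ)
    (hc : ∀ u v : Fin n, u ≠ v → 0 < c u v)
    (htri : ∀ u v w : Fin n, c u w ≤ c u v + c v w) :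
    Rstar n c k ≤ Rstar n c (n + (q + p - 1) / p) := by
  have hp0 : 0 < p := hp
  set m := (q + p - 1) / p with hm
  set k' := n + m with hk'def
  rcases eq_or_lt_of_le hn with hn2 | hn3
  · -- degenerate case n = 2 : no walks of odd length exist on two targets
    subst hn2
    have hq' : q = 1 := by omega
    have hm' : m = 1 := by
      rw [hm, hq', show 1 + p - 1 = p from by omega, Nat.div_self hp0]
    have hks : k % 2 = 1 := by omega
    have hk's : k' % 2 = 1 := by omega
    have hA : {T : ℝ | ∃ Wk : CWalk 2 k, T = Wk.R c} = ∅ :=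
      Set.eq_empty_iff_forall_notMem.mpr (by
        rintro T ⟨Wk, -⟩
        have := CWalk.two_even k Wk
        omega)
    have hB : {T : ℝ | ∃ Wk : CWalk 2 k', T = Wk.R c} = ∅ :=
      Set.eq_empty_iff_forall_notMem.mpr (by
        rintro T ⟨Wk, -⟩
        have := CWalk.two_even k' Wk
        omega)
    rw [Rstar, Rstar, hA, hB, Real.sInf_empty]
  · -- main case n ≥ 3
    have hm1 : 1 ≤ m := by
      rw [hm, Nat.le_div_iff_mul_le hp0]
      omega
    have hmq : m ≤ q := by
      have hle : q + p - 1 ≤ q * p := by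
        obtain ⟨p', rfl⟩ : ∃ p', p = p' + 1 := ⟨p - 1, by omega⟩
        have h1 : p' ≤ q * p' := Nat.le_mul_of_pos_left p' hq1
        have h2 : q * (p' + 1) = q * p' + q := by ring
        omega
      calc m ≤ q * p / p := Nat.div_le_div_right hle
      _ = q := Nat.mul_div_cancel q hp0
    have hk'3 : 3 ≤ k' := by omega
    have hk'4 : 4 ≤ k' := by omega
    have hnk' : n < k' := by omega
    have hk'2n : k' < 2 * n := by omega
    set r := if q % p = 0 then p else q % p with hr
    have hr1 : 1 ≤ r := by rw [hr]; split <;> omega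
    have hrp : r ≤ p := by
      rw [hr]; split
      · exact le_rfl
      · exact (Nat.mod_lt q hp0).le
    have hdm := Nat.div_add_mod q p
    set a := q / p with ha
    set b := q % p with hb
    have hKk : k = r * k' + (p - r) * (k' - 1) := by
      by_cases h0 : b = 0
      · have hrr : r = p := by rw [hr, if_pos h0]
        have hq'' : q = p * a := by omega
        have hmv : m = a := by
          rw [hm]
          have e2 : a * p = p * a := Nat.mul_comm _ _
          have e1 : q + p - 1 = (p - 1) + a * p := by omega
          rw [e1, Nat.add_mul_div_right _ _ hp0, Nat.div_eq_of_lt (by omega), Nat.zero_add]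
        rw [hrr, Nat.sub_self, Nat.zero_mul, Nat.add_zero, hk'def, hmv, hk, Nat.mul_add, ← hq'']
      · have hrr : r = b := by rw [hr, if_neg h0]
        have hmv : m = a + 1 := by
          rw [hm]
          have e2 : (a + 1) * p = p * a + p := by ring
          have e1 : q + p - 1 = (b - 1) + (a + 1) * p := by omega
          rw [e1, Nat.add_mul_div_right _ _ hp0, Nat.div_eq_of_lt (by omega)]
          omega
        have hbp : b < p := Nat.mod_lt _ hp0
        obtain ⟨pr, hpr⟩ : ∃ pr, p = b + pr := ⟨p - b, by omega⟩
        have hsub : p - r = pr := by omega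
        rw [hk'def, hmv, hsub, hrr, show n + (a + 1) - 1 = n + a from by omega, hk]
        have hq'' : q = p * a + b := by omega
        rw [hq'', hpr]
        ring
    have hk'k : k' ≤ k := by
      have h1 : k' ≤ r * k' := Nat.le_mul_of_pos_left k' hr1
      omega
    -- lower bound for the left-hand set
    have hlow : BddBelow {T : ℝ | ∃ Wk : CWalk n k, T = Wk.R c} :=
      ⟨0, by rintro T ⟨Wk, rfl⟩; exact CWalk.R_nonneg hc Wk⟩
    have hBne : {T : ℝ | ∃ Wk : CWalk n k', T = Wk.R c}.Nonempty := by
      obtain ⟨E⟩ := exists_cwalk n k' (by omega) hnk'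
      exact ⟨E.R c, E, rfl⟩
    rw [Rstar]
    apply le_csInf hBne
    rintro T ⟨W, rfl⟩
    -- find a good (removable) index in W and rotate it to position 1
    obtain ⟨s, hs1, hsdup, hsne⟩ := W.exists_good (by omega) hk'4 hnk'
    obtain ⟨V, hV⟩ : ∃ V : CWalk n k', ∀ i, V.seq i = W.seq (i + (s - 1)) := by
      refine ⟨⟨fun i => W.seq (i + (s - 1)), ?_, ?_, ?_⟩, fun i => rfl⟩
      · intro i
        show W.seq (i + k' + (s - 1)) = W.seq (i + (s - 1))
        rw [show i + k' + (s - 1) = (i + (s - 1)) + k' from by omega, W.periodic]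
      · intro i
        show W.seq (i + (s - 1)) ≠ W.seq (i + 1 + (s - 1))
        rw [show i + 1 + (s - 1) = (i + (s - 1)) + 1 from by omega]
        exact W.step _
      · intro d
        obtain ⟨u, hu, hud⟩ := W.covers d
        refine ⟨(u + (k' - 1) * (s - 1)) % k', Nat.mod_lt _ (by omega), ?_⟩
        show W.seq ((u + (k' - 1) * (s - 1)) % k' + (s - 1)) = d
        rw [← hud]
        apply W.seq_congr
        have h1 : ((u + (k' - 1) * (s - 1)) % k' + (s - 1)) % k'
            = (u + (k' - 1) * (s - 1) + (s - 1)) % k' :=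
          Nat.ModEq.add_right (s - 1) (Nat.mod_modEq _ k')
        have h2 : u + (k' - 1) * (s - 1) + (s - 1) = u + (s - 1) * k' := by
          have e : (k' - 1) * (s - 1) + (s - 1) = (s - 1) * k' := by
            calc (k' - 1) * (s - 1) + (s - 1) = ((k' - 1) + 1) * (s - 1) := by ring
            _ = k' * (s - 1) := by rw [show k' - 1 + 1 = k' from by omega]
            _ = (s - 1) * k' := Nat.mul_comm _ _
          omega
        rw [h1, h2, Nat.add_mul_mod_self_right]
    have hV0 : V.seq 0 ≠ V.seq 2 := by
      rw [hV, hV, show 0 + (s - 1) = s - 1 from by omega, show 2 + (s - 1) = s + 1 from by omega]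
      exact hsne
    have hV1 : V.seq 1 = W.seq s := by
      rw [hV, show 1 + (s - 1) = s from by omega]
    -- canonical occurrence avoiding position 1
    have hcanon : ∀ d : Fin n, ∃ o, o < k' ∧ o ≠ 1 ∧ V.seq o = d := by
      intro d
      obtain ⟨u, hu, hud⟩ := V.covers d
      by_cases h1 : u = 1
      · obtain ⟨a', b', hab, hbk, ha', hb'⟩ := hsdup
        have hmap : ∀ y, V.seq ((y + (k' - 1) * (s - 1)) % k') = W.seq y := by
          intro y
          rw [V.seq_mod, hV]
          apply W.seq_congr
          have h2 : y + (k' - 1) * (s - 1) + (s - 1) = y + (s - 1) * k' := by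
            have e : (k' - 1) * (s - 1) + (s - 1) = (s - 1) * k' := by
              calc (k' - 1) * (s - 1) + (s - 1) = ((k' - 1) + 1) * (s - 1) := by ring
              _ = k' * (s - 1) := by rw [show k' - 1 + 1 = k' from by omega]
              _ = (s - 1) * k' := Nat.mul_comm _ _
            omega
          rw [h2, Nat.add_mul_mod_self_right]
        have hda : V.seq ((a' + (k' - 1) * (s - 1)) % k') = d := by
          rw [hmap, ha', ← hV1, ← h1, hud]
        have hdb : V.seq ((b' + (k' - 1) * (s - 1)) % k') = d := by
          rw [hmap, hb', ← hV1, ← h1, hud]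
        have hne : (a' + (k' - 1) * (s - 1)) % k' ≠ (b' + (k' - 1) * (s - 1)) % k' := by
          intro hcon
          have h3 : a' % k' = b' % k' := Nat.ModEq.add_right_cancel' _ hcon
          rw [Nat.mod_eq_of_lt (by omega), Nat.mod_eq_of_lt hbk] at h3
          omega
        rcases eq_or_ne ((a' + (k' - 1) * (s - 1)) % k') 1 with h2 | h2
        · refine ⟨(b' + (k' - 1) * (s - 1)) % k', Nat.mod_lt _ (by omega), ?_, hdb⟩
          intro hcon
          exact hne (h2.trans hcon.symm)
        · exact ⟨(a' + (k' - 1) * (s - 1)) % k', Nat.mod_lt _ (by omega), h2, hda⟩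
      · exact ⟨u, hu, h1, hud⟩
    -- the concatenated walk of length k
    obtain ⟨Z, hZ⟩ : ∃ Z : CWalk n k, ∀ i, Z.seq i = V.seq (phi k' p r i) := by
      refine ⟨⟨fun i => V.seq (phi k' p r i), ?_, ?_, ?_⟩, fun i => rfl⟩
      · intro i
        show V.seq (phi k' p r (i + k)) = V.seq (phi k' p r i)
        rw [hKk, RSkipPhi.phi_add_K hk'3 hrp]
        exact V.seq_add_mul _ p
      · intro i
        show V.seq (phi k' p r i) ≠ V.seq (phi k' p r (i + 1))
        by_cases hs' : RSkip k' p r (phi k' p r i + 1)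
        · have he : phi k' p r (i + 1) = phi k' p r i + 2 := by
            simp [phi, if_pos hs']
          rw [he]
          have hmod1 : (phi k' p r i + 1) % k' = 1 := hs'.1
          have hx0 : phi k' p r i % k' = 0 := by
            have h := Nat.add_mod (phi k' p r i) 1 k'
            rw [Nat.mod_eq_of_lt (show 1 < k' by omega)] at h
            have hyk : phi k' p r i % k' < k' := Nat.mod_lt _ (by omega)
            rcases Nat.lt_or_ge (phi k' p r i % k' + 1) k' with h2 | h2
            · rw [Nat.mod_eq_of_lt h2] at h
              omega
            · have h3 : phi k' p r i % k' + 1 = k' := by omega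
              rw [h3, Nat.mod_self] at h
              omega
          obtain ⟨L, hL⟩ := Nat.dvd_of_mod_eq_zero hx0
          have h0 : V.seq (phi k' p r i) = V.seq 0 := by
            rw [hL, show k' * L = 0 + L * k' from by ring]
            exact V.seq_add_mul 0 L
          have h2' : V.seq (phi k' p r i + 2) = V.seq 2 := by
            rw [hL, show k' * L + 2 = 2 + L * k' from by ring]
            exact V.seq_add_mul 2 L
          rw [h0, h2']
          exact hV0
        · have he : phi k' p r (i + 1) = phi k' p r i + 1 := by
            simp [phi, if_neg hs']
          rw [he]
          exact V.step _
      · intro d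
        obtain ⟨u, hu, hud⟩ := V.covers d
        refine ⟨u, by omega, ?_⟩
        show V.seq (phi k' p r u) = d
        rw [RSkipPhi.phi_small hr1 (by omega) u hu]
        exact hud
    -- travel-time comparison along phi
    have httle : ∀ i j : ℕ, i ≤ j → Z.tt c i j ≤ V.tt c (phi k' p r i) (phi k' p r j) := by
      intro i j hij
      induction j, hij using Nat.le_induction with
      | base => simp [CWalk.tt]
      | succ j hij ih =>
        have hphij : phi k' p r i ≤ phi k' p r j := RSkipPhi.phi_mono.monotone hij
        have e1 : Z.tt c i (j + 1) = Z.tt c i j + c (Z.seq j) (Z.seq (j + 1)) := by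
          rw [CWalk.tt, Finset.sum_Ico_succ_top hij]
          rfl
        by_cases hs' : RSkip k' p r (phi k' p r j + 1)
        · have he : phi k' p r (j + 1) = phi k' p r j + 2 := by
            simp [phi, if_pos hs']
          have e2 : V.tt c (phi k' p r i) (phi k' p r j + 2)
              = V.tt c (phi k' p r i) (phi k' p r j)
                + c (V.seq (phi k' p r j)) (V.seq (phi k' p r j + 1))
                + c (V.seq (phi k' p r j + 1)) (V.seq (phi k' p r j + 2)) := by
            rw [CWalk.tt, show phi k' p r j + 2 = (phi k' p r j + 1) + 1 from rfl,
              Finset.sum_Ico_succ_top (by omega), Finset.sum_Ico_succ_top (by omega)]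
            rfl
          have e3 : c (Z.seq j) (Z.seq (j + 1))
              ≤ c (V.seq (phi k' p r j)) (V.seq (phi k' p r j + 1))
                + c (V.seq (phi k' p r j + 1)) (V.seq (phi k' p r j + 2)) := by
            rw [hZ, hZ, he]
            exact htri _ _ _
          rw [e1, he, e2]
          linarith
        · have he : phi k' p r (j + 1) = phi k' p r j + 1 := by
            simp [phi, if_neg hs']
          have e2 : V.tt c (phi k' p r i) (phi k' p r j + 1)
              = V.tt c (phi k' p r i) (phi k' p r j)
                + c (V.seq (phi k' p r j)) (V.seq (phi k' p r j + 1)) := by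
            rw [CWalk.tt, Finset.sum_Ico_succ_top (by omega)]
            rfl
          have e3 : c (Z.seq j) (Z.seq (j + 1))
              = c (V.seq (phi k' p r j)) (V.seq (phi k' p r j + 1)) := by
            rw [hZ, hZ, he]
          rw [e1, he, e2, e3]
          linarith
    -- every visit in Z is followed within duration (V) time by another visit
    have hD0 : (0:ℝ) ≤ V.duration c := CWalk.tt_nonneg hc V 0 k'
    have hZR : Z.R c ≤ V.duration c := by
      apply CWalk.R_le hc Z hD0
      intro i
      obtain ⟨o, hok, ho1, hoseq⟩ := hcanon (Z.seq i)
      have humod := Nat.div_add_mod (phi k' p r i) k'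
      have humlt : phi k' p r i % k' < k' := Nat.mod_lt _ (by omega)
      have hwmod : (o + k' * (phi k' p r i / k')
          + (if phi k' p r i % k' < o then 0 else k')) % k' = o := by
        split
        · rw [Nat.add_zero, Nat.add_mul_mod_self_left, Nat.mod_eq_of_lt hok]
        · rw [show o + k' * (phi k' p r i / k') + k' = o + k' * (phi k' p r i / k' + 1) from by
            ring, Nat.add_mul_mod_self_left, Nat.mod_eq_of_lt hok]
      have huw : phi k' p r i < o + k' * (phi k' p r i / k')
          + (if phi k' p r i % k' < o then 0 else k') := by
        split <;> omega
      have hwuk : o + k' * (phi k' p r i / k')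
          + (if phi k' p r i % k' < o then 0 else k') ≤ phi k' p r i + k' := by
        split <;> omega
      have hnsw : ¬ RSkip k' p r (o + k' * (phi k' p r i / k')
          + (if phi k' p r i % k' < o then 0 else k')) := by
        intro hsw
        exact ho1 (by rw [← hwmod, hsw.1])
      obtain ⟨j', hj'⟩ := RSkipPhi.phi_surj hk'3 _ hnsw
      have hij' : i < j' := by
        by_contra hcon
        push_neg at hcon
        have hmono : phi k' p r j' ≤ phi k' p r i := RSkipPhi.phi_mono.monotone hcon
        rw [hj'] at hmono
        omega
      refine ⟨j', hij', ?_, ?_⟩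
      · rw [hZ j', hj', ← V.seq_mod, hwmod, hoseq]
      · calc Z.tt c i j' ≤ V.tt c (phi k' p r i) (phi k' p r j') := httle i j' hij'.le
        _ = V.tt c (phi k' p r i) (o + k' * (phi k' p r i / k')
            + (if phi k' p r i % k' < o then 0 else k')) := by rw [hj']
        _ ≤ V.tt c (phi k' p r i) (phi k' p r i + k') := CWalk.tt_mono hc V huw.le hwuk
        _ = V.duration c := V.tt_window c _
    -- duration of V equals duration of W, which is at most R(W)
    have hdur : V.duration c = W.duration c := by
      have h1 : V.tt c 0 (0 + k') = W.tt c (s - 1) ((s - 1) + k') := by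
        rw [CWalk.tt_range, CWalk.tt_range]
        apply Finset.sum_congr rfl
        intro t _
        rw [hV, hV, show 0 + t + (s - 1) = s - 1 + t from by omega,
          show 0 + t + 1 + (s - 1) = s - 1 + t + 1 from by omega]
      calc V.duration c = V.tt c 0 (0 + k') := by rw [Nat.zero_add]; rfl
      _ = W.tt c (s - 1) ((s - 1) + k') := h1
      _ = W.duration c := W.tt_window c (s - 1)
    have hDR : W.duration c ≤ W.R c :=
      CWalk.duration_le_R hc W (W.exists_unique_visit hk'2n)
    calc Rstar n c k ≤ Z.R c := csInf_le hlow ⟨Z, rfl⟩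
    _ ≤ V.duration c := hZR
    _ = W.duration c := hdur
    _ ≤ W.R c := hDR
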